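/- Let G be a locally finite graph. Suppose there exist a vertex g_0 and a real number λ > 1 such that for every integer n ≥ 0 and every subset A of the sphere S_G(g_0, n), the set A* of vertices of S_G(g_0, n+1) adjacent to a vertex of A satisfies |A*| ≥ λ·|A|. If {f_n} is a sequence of non-negative integers such that the series Σ_{k=1}^∞ f_k / λ^k converges, then G does not have the {f_n}-containment property. -/

import Mathlib

open SimpleGraph

namespace Firefighter

variable {V : Type*}

/-- The set of vertices on fire at time `n`, starting from initial fire `X0`, with fire spreading
along paths of length at most `r` avoiding the protected sets `W 1, ..., W n`. -/
def fireSet (G : SimpleGraph V) (r : ℕ) (X0 : Set V) (W : ℕ → Set V) : ℕ → Set V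
  | 0 => X0
  | n + 1 => {v | ∃ u ∈ fireSet G r X0 W n, ∃ p : G.Walk u v, p.length ≤ r ∧
      ∀ w ∈ p.support, ∀ i, 1 ≤ i → i ≤ n + 1 → w ∉ W i}

/-- `W` is an `(f, r)`-containment strategy for the initial fire `X0` in `G`. -/
def IsContainmentStrategy (G : SimpleGraph V) (r : ℕ) (f : ℕ → ℕ)
    (X0 : Set V) (W : ℕ → Set V) : Prop :=
  (∀ n, 1 ≤ n → (W n).Finite ∧ (W n).ncard ≤ f n) ∧
  (∀ n, Disjoint (fireSet G r X0 W n) (W (n + 1))) ∧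
  (∃ N, 0 < N ∧ ∀ n, N ≤ n → fireSet G r X0 W n = fireSet G r X0 W N)

/-- `G` has the `(f, r)`-containment property. -/
def HasContainmentProperty (G : SimpleGraph V) (r : ℕ) (f : ℕ → ℕ) : Prop :=
  ∀ X0 : Set V, X0.Finite → ∃ W : ℕ → Set V, IsContainmentStrategy G r f X0 W

/-- A graph is locally finite if every vertex has finitely many neighbors. -/
def LocallyFiniteGraph (G : SimpleGraph V) : Prop := ∀ v, (G.neighborSet v).Finite

/-- The ball of radius `n` about the vertex `g0` (in the combinatorial metric). -/
def ball (G : SimpleGraph V) (g0 : V) (n : ℕ) : Set V :=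
  {v | G.Reachable g0 v ∧ G.dist g0 v ≤ n}

/-- The sphere of radius `n` about the vertex `g0` (in the combinatorial metric). -/
def sphere (G : SimpleGraph V) (g0 : V) (n : ℕ) : Set V :=
  {v | G.Reachable g0 v ∧ G.dist g0 v = n}

/-- For `T` a subset of the sphere of radius `n`, `nextAdj G g0 n T` is the set `T*` of vertices
of the sphere of radius `n+1` adjacent to at least one vertex of `T`. -/
def nextAdj (G : SimpleGraph V) (g0 : V) (n : ℕ) (T : Set V) : Set V :=
  {v ∈ sphere G g0 (n + 1) | ∃ u ∈ T, G.Adj u v}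

/-- A graph has bounded degree if there is a uniform finite bound on vertex degrees. -/
def BoundedDegree (G : SimpleGraph V) : Prop :=
  ∃ D : ℕ, ∀ v, (G.neighborSet v).Finite ∧ (G.neighborSet v).ncard ≤ D

/-- Two graphs are quasi-isometric. -/
def QuasiIsometric {V' : Type*} (G : SimpleGraph V) (H : SimpleGraph V') : Prop :=
  ∃ c : ℕ, 1 ≤ c ∧ ∃ (φ : V → V') (ψ : V' → V),
    (∀ g1 g2, H.dist (φ g1) (φ g2) ≤ c * G.dist g1 g2 + c) ∧
    (∀ h1 h2, G.dist (ψ h1) (ψ h2) ≤ c * H.dist h1 h2 + c) ∧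
    (∀ g, G.dist g (ψ (φ g)) ≤ c) ∧
    (∀ h, H.dist h (φ (ψ h)) ≤ c)

/-- `f ≼ g` : there is `c > 0` with `f n ≤ c * g (c*n + c) + c` for all `n ≥ c`. -/
def Preceq (f g : ℕ → ℕ) : Prop :=
  ∃ c : ℕ, 0 < c ∧ ∀ n, c ≤ n → f n ≤ c * g (c * n + c) + c

/-- `f` and `g` have equivalent asymptotic growth. -/
def AsympEquiv (f g : ℕ → ℕ) : Prop := Preceq f g ∧ Preceq g f

/-- The ball of radius `n` about a set `X` of vertices. -/
def ballSet (G : SimpleGraph V) (X : Set V) (n : ℕ) : Set V :=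
  {v | ∃ u ∈ X, ∃ p : G.Walk u v, p.length ≤ n}

section Aux

variable {G : SimpleGraph V} {g0 : V} {X0 : Set V} {W : ℕ → Set V}

lemma sphere_subset_ball (n : ℕ) : sphere G g0 n ⊆ ball G g0 n :=
  fun _ hv => ⟨hv.1, le_of_eq hv.2⟩

lemma ball_finite (hlf : LocallyFiniteGraph G) (g0 : V) : ∀ n, (ball G g0 n).Finite := by
  intro n
  induction n with
  | zero =>
    apply Set.Finite.subset (Set.finite_singleton g0)
    rintro v ⟨hr, hd⟩
    have : G.dist g0 v = 0 := Nat.le_zero.mp hd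
    simp only [Set.mem_singleton_iff]
    exact (hr.dist_eq_zero_iff.mp this).symm
  | succ n ih =>
    have hsub : ball G g0 (n + 1) ⊆ ball G g0 n ∪ ⋃ u ∈ ball G g0 n, G.neighborSet u := by
      rintro v ⟨hr, hd⟩
      rcases Nat.lt_or_ge (G.dist g0 v) (n + 1) with h | h
      · exact Or.inl ⟨hr, Nat.lt_succ_iff.mp h⟩
      · have hd' : G.dist g0 v = n + 1 := le_antisymm hd h
        obtain ⟨p, hp⟩ := hr.exists_walk_length_eq_dist
        rw [hd'] at hp
        have := p.reverse
        cases hq : p.reverse with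
        | nil =>
          exfalso
          have : p.reverse.length = n + 1 := by rw [SimpleGraph.Walk.length_reverse, hp]
          rw [hq] at this; simp at this
        | cons hadj q =>
          rename_i u
          right
          have hql : q.length = n := by
            have : p.reverse.length = n + 1 := by rw [SimpleGraph.Walk.length_reverse, hp]
            rw [hq] at this
            simpa using this
          have hu : u ∈ ball G g0 n := by
            refine ⟨q.reverse.reachable, ?_⟩
            have := SimpleGraph.dist_le q.reverse
            rwa [SimpleGraph.Walk.length_reverse, hql] at this
          exact Set.mem_biUnion hu hadj.symm
    exact Set.Finite.subset (ih.union (ih.biUnion (fun u _ => hlf u))) hsub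

lemma sphere_finite (hlf : LocallyFiniteGraph G) (g0 : V) (n : ℕ) :
    (sphere G g0 n).Finite :=
  (ball_finite hlf g0 n).subset (sphere_subset_ball n)

lemma sphere_zero : sphere G g0 0 = {g0} := by
  ext v
  constructor
  · rintro ⟨hr, hd⟩
    exact Set.mem_singleton_iff.mpr (hr.dist_eq_zero_iff.mp hd).symm
  · intro hv
    rw [Set.mem_singleton_iff] at hv
    subst hv
    exact ⟨Reachable.refl _, SimpleGraph.dist_self⟩

lemma pow_le_ncard_sphere {lam : ℝ} (hlam : 1 < lam)
    (hexp : ∀ n : ℕ, ∀ A ⊆ sphere G g0 n,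
      lam * (A.ncard : ℝ) ≤ ((nextAdj G g0 n A).ncard : ℝ))
    (hfin : ∀ n, (sphere G g0 n).Finite) :
    ∀ n, lam ^ n ≤ ((sphere G g0 n).ncard : ℝ) := by
  intro n
  induction n with
  | zero => simp [sphere_zero]
  | succ n ih =>
    have h1 := hexp n (sphere G g0 n) (subset_refl _)
    have h2 : nextAdj G g0 n (sphere G g0 n) ⊆ sphere G g0 (n + 1) := fun v hv => hv.1
    have h3 : ((nextAdj G g0 n (sphere G g0 n)).ncard : ℝ) ≤ ((sphere G g0 (n + 1)).ncard : ℝ) := by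
      exact_mod_cast Set.ncard_le_ncard h2 (hfin (n + 1))
    have h0 : (0 : ℝ) < lam := by linarith
    calc lam ^ (n + 1) = lam * lam ^ n := by ring
      _ ≤ lam * ((sphere G g0 n).ncard : ℝ) := by
          exact mul_le_mul_of_nonneg_left ih (le_of_lt h0)
      _ ≤ ((nextAdj G g0 n (sphere G g0 n)).ncard : ℝ) := h1
      _ ≤ _ := h3

lemma fireSet_avoid (n i : ℕ) (h1 : 1 ≤ i) (hn : i ≤ n) {v : V}
    (hv : v ∈ fireSet G 1 X0 W n) : v ∉ W i := by
  cases n with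
  | zero => omega
  | succ m =>
    obtain ⟨u, hu, p, hlen, hw⟩ := hv
    exact hw v p.end_mem_support i h1 hn

lemma fireSet_spread (hdis : ∀ n, Disjoint (fireSet G 1 X0 W n) (W (n + 1)))
    (n : ℕ) {u v : V} (hu : u ∈ fireSet G 1 X0 W n) (huv : G.Adj u v)
    (hv : ∀ i, 1 ≤ i → i ≤ n + 1 → v ∉ W i) : v ∈ fireSet G 1 X0 W (n + 1) := by
  refine ⟨u, hu, SimpleGraph.Walk.cons huv SimpleGraph.Walk.nil, by simp, ?_⟩
  intro w hw i h1 hin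
  simp only [SimpleGraph.Walk.support_cons, SimpleGraph.Walk.support_nil,
    List.mem_cons, List.mem_singleton] at hw
  rcases hw with rfl | rfl | h
  · rcases Nat.lt_or_ge i (n + 1) with h | h
    · exact fireSet_avoid n i h1 (by omega) hu
    · have : i = n + 1 := by omega
      subst this
      exact Set.disjoint_left.mp (hdis n) hu
  · exact hv i h1 hin
  · simp at h

lemma fireSet_subset_ball (M : ℕ) :
    ∀ n, fireSet G 1 (ball G g0 M) W n ⊆ ball G g0 (M + n) := by
  intro n
  induction n with
  | zero => intro v hv; exact ⟨hv.1, hv.2.trans (by omega)⟩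
  | succ n ih =>
    rintro v ⟨u, hu, p, hlen, -⟩
    obtain ⟨hr, hd⟩ := ih hu
    obtain ⟨q, hq⟩ := hr.exists_walk_length_eq_dist
    refine ⟨hr.trans p.reachable, ?_⟩
    have hle := SimpleGraph.dist_le (q.append p)
    rw [SimpleGraph.Walk.length_append, hq] at hle
    omega

lemma ncard_biUnion_le (s : Finset ℕ) (g : ℕ → Set V) :
    (⋃ i ∈ s, g i).ncard ≤ ∑ i ∈ s, (g i).ncard := by
  classical
  induction s using Finset.induction with
  | empty => simp
  | insert a s hns ih =>
    rw [Finset.set_biUnion_insert, Finset.sum_insert hns]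
    exact (Set.ncard_union_le _ _).trans (by omega)

end Aux

/-- if every subset `A` of every sphere about `g0` satisfies `|A*| ≥ λ·|A|` with
`λ > 1`, and `Σ_{k≥1} f_k / λ^k` converges, then `G` does not have the `{f_n}`-containment
property. -/
theorem stmt13 {V : Type*} (G : SimpleGraph V) (hlf : LocallyFiniteGraph G) (g0 : V)
    (lam : ℝ) (hlam : 1 < lam)
    (hexp : ∀ n : ℕ, ∀ A ⊆ sphere G g0 n,
      lam * (A.ncard : ℝ) ≤ ((nextAdj G g0 n A).ncard : ℝ))
    (f : ℕ → ℕ) (hsum : Summable (fun k : ℕ => (f (k + 1) : ℝ) / lam ^ (k + 1))) :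
    ¬ HasContainmentProperty G 1 f := by
  intro hP
  have hlam0 : (0 : ℝ) < lam := by linarith
  set S : ℝ := ∑' k : ℕ, (f (k + 1) : ℝ) / lam ^ (k + 1) with hSdef
  have hS0 : 0 ≤ S := tsum_nonneg (fun k => by positivity)
  set C : ℝ := lam / (lam - 1) * S with hCdef
  have hC0 : 0 ≤ C := by
    apply mul_nonneg _ hS0
    apply div_nonneg (le_of_lt hlam0); linarith
  obtain ⟨M, hM⟩ := pow_unbounded_of_one_lt C hlam
  have hsphfin : ∀ n, (sphere G g0 n).Finite := sphere_finite hlf g0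
  obtain ⟨W, hWcard, hdis, N, hN0, hstab⟩ := hP (ball G g0 M) (ball_finite hlf g0 M)
  set X : ℕ → Set V := fireSet G 1 (ball G g0 M) W with hXdef
  set T : ℕ → Set V := fun n => X n ∩ sphere G g0 (M + n) with hTdef
  have hTfin : ∀ n, (T n).Finite := fun n => (hsphfin _).subset Set.inter_subset_right
  have hTsub : ∀ n, T n ⊆ sphere G g0 (M + n) := fun _ => Set.inter_subset_right
  set t : ℕ → ℝ := fun n => ((T n).ncard : ℝ) with htdef
  set P : ℕ → ℝ := fun n => ∑ i ∈ Finset.range n, (f (i + 1) : ℝ) with hPdef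
  -- initial size
  have hT0 : T 0 = sphere G g0 M :=
    Set.inter_eq_self_of_subset_right (sphere_subset_ball M)
  have ht0 : lam ^ M ≤ t 0 := by
    show lam ^ M ≤ ((T 0).ncard : ℝ)
    rw [hT0]
    exact pow_le_ncard_sphere hlam hexp hsphfin M
  -- one-step inequality
  have hstep : ∀ n, lam * t n - P (n + 1) ≤ t (n + 1) := by
    intro n
    set A : Set V := nextAdj G g0 (M + n) (T n) with hAdef
    set U : Set V := ⋃ i ∈ Finset.range (n + 1), W (i + 1) with hUdef
    have hUfin : U.Finite := Set.Finite.biUnion (Finset.range (n + 1)).finite_toSet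
      (fun i _ => (hWcard (i + 1) (by omega)).1)
    have hUcard : (U.ncard : ℝ) ≤ P (n + 1) := by
      have h1 := ncard_biUnion_le (Finset.range (n + 1)) (fun i => W (i + 1))
      have h2 : ∑ i ∈ Finset.range (n + 1), (W (i + 1)).ncard ≤
          ∑ i ∈ Finset.range (n + 1), f (i + 1) :=
        Finset.sum_le_sum (fun i _ => (hWcard (i + 1) (by omega)).2)
      rw [hPdef]
      push_cast
      calc (U.ncard : ℝ) ≤ (∑ i ∈ Finset.range (n + 1), (W (i + 1)).ncard : ℕ) := by
            exact_mod_cast h1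
        _ ≤ _ := by exact_mod_cast h2
    have hAsub : A ⊆ sphere G g0 (M + n + 1) := fun v hv => hv.1
    have hdiff : A \ U ⊆ T (n + 1) := by
      rintro v ⟨⟨hvs, u, hu, huv⟩, hvU⟩
      have hvW : ∀ i, 1 ≤ i → i ≤ n + 1 → v ∉ W i := by
        intro i h1 h2 hvi
        have hmem : v ∈ W (i - 1 + 1) := by
          rw [show i - 1 + 1 = i by omega]; exact hvi
        exact hvU (Set.mem_biUnion
          (Finset.mem_coe.mpr (Finset.mem_range.mpr (by omega : i - 1 < n + 1))) hmem)
      refine ⟨fireSet_spread hdis n hu.1 huv hvW, ?_⟩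
      have : M + (n + 1) = M + n + 1 := by omega
      rw [this]
      exact hvs
    have h1 : lam * t n ≤ (A.ncard : ℝ) := hexp (M + n) (T n) (hTsub n)
    have h2 : A.ncard ≤ (A \ U).ncard + U.ncard :=
      Set.ncard_le_ncard_diff_add_ncard A U hUfin
    have h3 : (A \ U).ncard ≤ (T (n + 1)).ncard :=
      Set.ncard_le_ncard hdiff (hTfin (n + 1))
    have h2' : (A.ncard : ℝ) ≤ ((A \ U).ncard : ℝ) + (U.ncard : ℝ) := by exact_mod_cast h2
    have h3' : ((A \ U).ncard : ℝ) ≤ t (n + 1) := by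
      show ((A \ U).ncard : ℝ) ≤ ((T (n + 1)).ncard : ℝ)
      exact_mod_cast h3
    linarith
  -- partial sums
  set Sn : ℕ → ℝ := fun n => ∑ j ∈ Finset.range n, (f (j + 1) : ℝ) / lam ^ (j + 1) with hSndef
  set D : ℕ → ℝ := fun n => ∑ m ∈ Finset.range n, P (m + 1) / lam ^ (m + 1) with hDdef
  have hlamne : lam ≠ 0 := ne_of_gt hlam0
  have hlam1ne : lam - 1 ≠ 0 := sub_ne_zero_of_ne (ne_of_gt hlam)
  have hid : ∀ n, D n = lam / (lam - 1) * Sn n - (1 / (lam - 1)) * (P n / lam ^ n) := by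
    intro n
    induction n with
    | zero => simp [hDdef, hSndef, hPdef]
    | succ n ih =>
      have hD : D (n + 1) = D n + P (n + 1) / lam ^ (n + 1) := Finset.sum_range_succ _ n
      have hSn : Sn (n + 1) = Sn n + (f (n + 1) : ℝ) / lam ^ (n + 1) := Finset.sum_range_succ _ n
      have hPs : P (n + 1) = P n + (f (n + 1) : ℝ) := Finset.sum_range_succ _ n
      rw [hD, hSn, ih, hPs]
      have hpowne : lam ^ n ≠ 0 := pow_ne_zero n hlamne
      field_simp
      ring
  have hPn0 : ∀ n, 0 ≤ P n := fun n => Finset.sum_nonneg (fun i _ => by positivity)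
  have hDle : ∀ n, D n ≤ C := by
    intro n
    rw [hid n, hCdef]
    have hSnle : Sn n ≤ S := by
      rw [hSdef, hSndef]
      exact Summable.sum_le_tsum (Finset.range n) (fun i _ => by positivity) hsum
    have h1 : lam / (lam - 1) * Sn n ≤ lam / (lam - 1) * S := by
      apply mul_le_mul_of_nonneg_left hSnle
      apply div_nonneg (le_of_lt hlam0); linarith
    have h2 : 0 ≤ (1 / (lam - 1)) * (P n / lam ^ n) := by
      apply mul_nonneg
      · apply div_nonneg zero_le_one; linarith
      · exact div_nonneg (hPn0 n) (by positivity)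
    linarith
  -- main induction
  have key : ∀ n, lam ^ n * (t 0 - D n) ≤ t n := by
    intro n
    induction n with
    | zero => simp [hDdef]
    | succ n ih =>
      have hD : D (n + 1) = D n + P (n + 1) / lam ^ (n + 1) := Finset.sum_range_succ _ n
      have h1 : lam * (lam ^ n * (t 0 - D n)) ≤ lam * t n :=
        mul_le_mul_of_nonneg_left ih (le_of_lt hlam0)
      have h2 := hstep n
      have hpow : (0 : ℝ) < lam ^ (n + 1) := by positivity
      have hcalc : lam ^ (n + 1) * (t 0 - D (n + 1)) =
          lam * (lam ^ n * (t 0 - D n)) - P (n + 1) := by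
        rw [hD]
        field_simp
        ring
      linarith
  have hpos : ∀ n, 0 < t n := by
    intro n
    have h1 : lam ^ n * (t 0 - D n) ≤ t n := key n
    have h2 : 0 < t 0 - D n := by
      have := hDle n
      have h3 : C < lam ^ M := hM
      linarith
    have : (0 : ℝ) < lam ^ n := by positivity
    nlinarith
  -- contradiction
  have hne : (T (N + 1)).Nonempty := by
    rw [← Set.ncard_pos (hTfin (N + 1))]
    have h : (0 : ℝ) < ((T (N + 1)).ncard : ℝ) := hpos (N + 1)
    exact_mod_cast h
  obtain ⟨v, hv⟩ := hne
  have hvX : v ∈ X N := by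
    rw [← hstab (N + 1) (by omega)]
    exact hv.1
  have hball : v ∈ ball G g0 (M + N) := fireSet_subset_ball M N hvX
  have hsph : v ∈ sphere G g0 (M + (N + 1)) := hv.2
  have h1 : G.dist g0 v ≤ M + N := hball.2
  have h2 : G.dist g0 v = M + (N + 1) := hsph.2
  omega

end Firefighter
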